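/- Let D consist of upwards closed dependencies and let φ(x̄, v) be an FO(D)-formula. Then ∃v φ is logically equivalent to (∃v φᶠ) ∧ ∀v (φ ↾ φᶠ). -/
import Mathlib


/-- Formulas of first-order logic with team semantics, in negation normal form,
over a relational signature `σ` (with arities `ar`) extended with dependency
atoms indexed by `δ` (with arities `dar`).  Equality and inequality literals
are between tuples of variables; variables are natural numbers. -/
inductive TForm (σ : Type) (ar : σ → ℕ) (δ : Type) (dar : δ → ℕ) : Type
  | rel (r : σ) (ts : Fin (ar r) → ℕ)
  | nrel (r : σ) (ts : Fin (ar r) → ℕ)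
  | eq (k : ℕ) (x y : Fin k → ℕ)
  | neq (k : ℕ) (x y : Fin k → ℕ)
  | dep (d : δ) (xs : Fin (dar d) → ℕ)
  | and (φ ψ : TForm σ ar δ dar)
  | or (φ ψ : TForm σ ar δ dar)
  | ex (v : ℕ) (φ : TForm σ ar δ dar)
  | all (v : ℕ) (φ : TForm σ ar δ dar)

/-- A team over a model with carrier `M`: a set of assignments. -/
abbrev Team (M : Type) := Set (ℕ → M)

/-- `X(x̄)`: the relation of values of the tuple `x̄` in the team `X`. -/
def Team.rel {M : Type} (X : Team M) {k : ℕ} (xs : Fin k → ℕ) : Set (Fin k → M) :=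
  {t | ∃ s ∈ X, t = fun i => s (xs i)}

/-- An interpretation of a family of dependencies: for each index, an
isomorphism-invariant-style class of pairs (carrier, relation). -/
abbrev DepFam (δ : Type) (dar : δ → ℕ) := ∀ d : δ, ∀ M : Type, Set (Fin (dar d) → M) → Prop

/-- Lax team semantics. -/
def tsat {σ : Type} {ar : σ → ℕ} {δ : Type} {dar : δ → ℕ} {M : Type}
    (RI : ∀ r : σ, Set (Fin (ar r) → M)) (DI : DepFam δ dar) :
    TForm σ ar δ dar → Team M → Prop
  | .rel r ts, X => ∀ s ∈ X, (fun i => s (ts i)) ∈ RI r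
  | .nrel r ts, X => ∀ s ∈ X, (fun i => s (ts i)) ∉ RI r
  | .eq _ x y, X => ∀ s ∈ X, (fun i => s (x i)) = fun i => s (y i)
  | .neq _ x y, X => ∀ s ∈ X, (fun i => s (x i)) ≠ fun i => s (y i)
  | .dep d xs, X => DI d M (X.rel xs)
  | .and φ ψ, X => tsat RI DI φ X ∧ tsat RI DI ψ X
  | .or φ ψ, X => ∃ Y Z, X = Y ∪ Z ∧ tsat RI DI φ Y ∧ tsat RI DI ψ Z
  | .ex v φ, X => ∃ H : (ℕ → M) → Set M, (∀ s ∈ X, (H s).Nonempty) ∧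
      tsat RI DI φ {s' | ∃ s ∈ X, ∃ m ∈ H s, s' = Function.update s v m}
  | .all v φ, X => tsat RI DI φ {s' | ∃ s ∈ X, ∃ m : M, s' = Function.update s v m}

/-- Tarski (single-assignment) semantics; dependency atoms are treated as
trivially true (they are only meaningful for first-order formulas). -/
def ssat {σ : Type} {ar : σ → ℕ} {δ : Type} {dar : δ → ℕ} {M : Type}
    (RI : ∀ r : σ, Set (Fin (ar r) → M)) :
    TForm σ ar δ dar → (ℕ → M) → Prop
  | .rel r ts, s => (fun i => s (ts i)) ∈ RI r
  | .nrel r ts, s => (fun i => s (ts i)) ∉ RI r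
  | .eq _ x y, s => (fun i => s (x i)) = fun i => s (y i)
  | .neq _ x y, s => (fun i => s (x i)) ≠ fun i => s (y i)
  | .dep _ _, _ => True
  | .and φ ψ, s => ssat RI φ s ∧ ssat RI ψ s
  | .or φ ψ, s => ssat RI φ s ∨ ssat RI ψ s
  | .ex v φ, s => ∃ m : M, ssat RI φ (Function.update s v m)
  | .all v φ, s => ∀ m : M, ssat RI φ (Function.update s v m)

/-- A formula is first-order if it contains no dependency atoms. -/
def TForm.isFO {σ : Type} {ar : σ → ℕ} {δ : Type} {dar : δ → ℕ} :
    TForm σ ar δ dar → Prop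
  | .dep _ _ => False
  | .and φ ψ => φ.isFO ∧ ψ.isFO
  | .or φ ψ => φ.isFO ∧ ψ.isFO
  | .ex _ φ => φ.isFO
  | .all _ φ => φ.isFO
  | _ => True

/-- Free variables of a formula. -/
def TForm.free {σ : Type} {ar : σ → ℕ} {δ : Type} {dar : δ → ℕ} :
    TForm σ ar δ dar → Set ℕ
  | .rel _ ts => Set.range ts
  | .nrel _ ts => Set.range ts
  | .eq _ x y => Set.range x ∪ Set.range y
  | .neq _ x y => Set.range x ∪ Set.range y
  | .dep _ xs => Set.range xs
  | .and φ ψ => φ.free ∪ ψ.free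
  | .or φ ψ => φ.free ∪ ψ.free
  | .ex v φ => φ.free \ {v}
  | .all v φ => φ.free \ {v}

/-- The flattening `φᶠ`: replace every dependency atom by the trivially true
atom `⊤` (here rendered as the empty-tuple equality). -/
def TForm.flatten {σ : Type} {ar : σ → ℕ} {δ : Type} {dar : δ → ℕ} :
    TForm σ ar δ dar → TForm σ ar δ dar
  | .dep _ _ => .eq 0 Fin.elim0 Fin.elim0
  | .and φ ψ => .and φ.flatten ψ.flatten
  | .or φ ψ => .or φ.flatten ψ.flatten
  | .ex v φ => .ex v φ.flatten
  | .all v φ => .all v φ.flatten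
  | φ => φ

/-- Negation normal form of the negation of a (first-order) formula. -/
def TForm.neg {σ : Type} {ar : σ → ℕ} {δ : Type} {dar : δ → ℕ} :
    TForm σ ar δ dar → TForm σ ar δ dar
  | .rel r ts => .nrel r ts
  | .nrel r ts => .rel r ts
  | .eq k x y => .neq k x y
  | .neq k x y => .eq k x y
  | .dep d xs => .dep d xs
  | .and φ ψ => .or φ.neg ψ.neg
  | .or φ ψ => .and φ.neg ψ.neg
  | .ex v φ => .all v φ.neg
  | .all v φ => .ex v φ.neg

/-- `(ψ ↾ θ) := (¬θ) ∨ (θ ∧ ψ)`. -/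
def TForm.restrict {σ : Type} {ar : σ → ℕ} {δ : Type} {dar : δ → ℕ}
    (ψ θ : TForm σ ar δ dar) : TForm σ ar δ dar :=
  .or θ.neg (.and θ ψ)

/-- A family of dependencies is upwards closed. -/
def UpClosed {δ : Type} {dar : δ → ℕ} (DI : DepFam δ dar) : Prop :=
  ∀ (d : δ) (M : Type) (R S : Set (Fin (dar d) → M)), R ⊆ S → DI d M R → DI d M S

/-- The constancy dependency of arity `n`. -/
def ConstD (n : ℕ) : ∀ M : Type, Set (Fin n → M) → Prop :=
  fun _ R => ∀ t ∈ R, ∀ t' ∈ R, t = t'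


section Aux
variable {σ : Type} {ar : σ → ℕ} {δ : Type} {dar : δ → ℕ} {M : Type}
variable (RI : ∀ r : σ, Set (Fin (ar r) → M)) (DI : DepFam δ dar)

theorem flatten_isFO (φ : TForm σ ar δ dar) : φ.flatten.isFO := by
  induction φ <;> simp_all [TForm.flatten, TForm.isFO]

theorem neg_isFO (φ : TForm σ ar δ dar) (h : φ.isFO) : φ.neg.isFO := by
  induction φ <;> simp_all [TForm.neg, TForm.isFO]

theorem ssat_flatten (φ : TForm σ ar δ dar) (s : ℕ → M) :
    ssat RI φ.flatten s ↔ ssat RI φ s := by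
  induction φ generalizing s <;>
    simp_all [TForm.flatten, ssat]

theorem ssat_neg (φ : TForm σ ar δ dar) (h : φ.isFO) (s : ℕ → M) :
    ssat RI φ.neg s ↔ ¬ ssat RI φ s := by
  induction φ generalizing s <;>
    simp_all [TForm.neg, ssat, TForm.isFO, not_or, Classical.not_forall] <;> tauto

theorem tsat_ssat (φ : TForm σ ar δ dar) (X : Team M)
    (h : tsat RI DI φ X) : ∀ s ∈ X, ssat RI φ s := by
  induction φ generalizing X with
  | rel r ts => exact h
  | nrel r ts => exact h
  | eq k x y => exact h
  | neq k x y => exact h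
  | dep d xs => intro s _; trivial
  | and φ ψ ihφ ihψ =>
      intro s hs; exact ⟨ihφ X h.1 s hs, ihψ X h.2 s hs⟩
  | or φ ψ ihφ ihψ =>
      obtain ⟨Y, Z, rfl, hY, hZ⟩ := h
      intro s hs
      rcases hs with hs | hs
      · exact Or.inl (ihφ Y hY s hs)
      · exact Or.inr (ihψ Z hZ s hs)
  | ex v φ ih =>
      obtain ⟨H, hne, hφ⟩ := h
      intro s hs
      obtain ⟨m, hm⟩ := hne s hs
      exact ⟨m, ih _ hφ _ ⟨s, hs, m, hm, rfl⟩⟩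
  | all v φ ih =>
      intro s hs m
      exact ih _ h _ ⟨s, hs, m, rfl⟩

theorem flat_tsat (φ : TForm σ ar δ dar) (hFO : φ.isFO) (X : Team M)
    (h : ∀ s ∈ X, ssat RI φ s) : tsat RI DI φ X := by
  induction φ generalizing X with
  | rel r ts => exact h
  | nrel r ts => exact h
  | eq k x y => exact h
  | neq k x y => exact h
  | dep d xs => exact absurd hFO (by simp [TForm.isFO])
  | and φ ψ ihφ ihψ =>
      exact ⟨ihφ hFO.1 X (fun s hs => (h s hs).1), ihψ hFO.2 X (fun s hs => (h s hs).2)⟩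
  | or φ ψ ihφ ihψ =>
      refine ⟨{s ∈ X | ssat RI φ s}, {s ∈ X | ssat RI ψ s}, ?_, ?_, ?_⟩
      · ext s
        constructor
        · intro hs
          rcases h s hs with h' | h'
          · exact Or.inl ⟨hs, h'⟩
          · exact Or.inr ⟨hs, h'⟩
        · rintro (⟨hs, _⟩ | ⟨hs, _⟩) <;> exact hs
      · exact ihφ hFO.1 _ (fun s hs => hs.2)
      · exact ihψ hFO.2 _ (fun s hs => hs.2)
  | ex v φ ih =>
      refine ⟨fun s => {m | ssat RI φ (Function.update s v m)}, fun s hs => h s hs, ?_⟩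
      exact ih hFO _ (by rintro s' ⟨s, hs, m, hm, rfl⟩; exact hm)
  | all v φ ih =>
      exact ih hFO _ (by rintro s' ⟨s, hs, m, rfl⟩; exact h s hs m)

theorem tsat_union (hup : UpClosed DI) (φ : TForm σ ar δ dar) (Y Z : Team M)
    (hY : tsat RI DI φ Y) (hZ : ∀ s ∈ Z, ssat RI φ s) : tsat RI DI φ (Y ∪ Z) := by
  induction φ generalizing Y Z with
  | rel r ts =>
      rintro s (hs | hs); exacts [hY s hs, hZ s hs]
  | nrel r ts =>
      rintro s (hs | hs); exacts [hY s hs, hZ s hs]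
  | eq k x y =>
      rintro s (hs | hs); exacts [hY s hs, hZ s hs]
  | neq k x y =>
      rintro s (hs | hs); exacts [hY s hs, hZ s hs]
  | dep d xs =>
      refine hup d M (Y.rel xs) ((Y ∪ Z).rel xs) ?_ hY
      rintro t ⟨s, hs, rfl⟩
      exact ⟨s, Or.inl hs, rfl⟩
  | and φ ψ ihφ ihψ =>
      exact ⟨ihφ Y Z hY.1 (fun s hs => (hZ s hs).1),
             ihψ Y Z hY.2 (fun s hs => (hZ s hs).2)⟩
  | or φ ψ ihφ ihψ =>
      obtain ⟨Y₁, Y₂, rfl, h₁, h₂⟩ := hY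
      refine ⟨Y₁ ∪ {s ∈ Z | ssat RI φ s}, Y₂ ∪ {s ∈ Z | ssat RI ψ s}, ?_, ?_, ?_⟩
      · ext s
        constructor
        · rintro ((hs | hs) | hs)
          · exact Or.inl (Or.inl hs)
          · exact Or.inr (Or.inl hs)
          · rcases hZ s hs with h' | h'
            · exact Or.inl (Or.inr ⟨hs, h'⟩)
            · exact Or.inr (Or.inr ⟨hs, h'⟩)
        · rintro ((hs | ⟨hs, _⟩) | (hs | ⟨hs, _⟩))
          exacts [Or.inl (Or.inl hs), Or.inr hs, Or.inl (Or.inr hs), Or.inr hs]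
      · exact ihφ Y₁ _ h₁ (fun s hs => hs.2)
      · exact ihψ Y₂ _ h₂ (fun s hs => hs.2)
  | ex v φ ih =>
      obtain ⟨H, hne, hφ⟩ := hY
      refine ⟨fun s => {m | (s ∈ Y ∧ m ∈ H s) ∨ (s ∈ Z ∧ ssat RI φ (Function.update s v m))},
        ?_, ?_⟩
      · rintro s (hs | hs)
        · obtain ⟨m, hm⟩ := hne s hs
          exact ⟨m, Or.inl ⟨hs, hm⟩⟩
        · obtain ⟨m, hm⟩ := hZ s hs
          exact ⟨m, Or.inr ⟨hs, hm⟩⟩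
      · have hset : {s' | ∃ s ∈ Y ∪ Z, ∃ m ∈ {m | (s ∈ Y ∧ m ∈ H s) ∨
              (s ∈ Z ∧ ssat RI φ (Function.update s v m))}, s' = Function.update s v m}
            = {s' | ∃ s ∈ Y, ∃ m ∈ H s, s' = Function.update s v m}
              ∪ {s' | (∃ s ∈ Z, ∃ m, s' = Function.update s v m) ∧ ssat RI φ s'} := by
          ext s'
          constructor
          · rintro ⟨s, _, m, (⟨hsY, hm⟩ | ⟨hsZ, hm⟩), rfl⟩
            · exact Or.inl ⟨s, hsY, m, hm, rfl⟩
            · exact Or.inr ⟨⟨s, hsZ, m, rfl⟩, hm⟩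
          · rintro (⟨s, hs, m, hm, rfl⟩ | ⟨⟨s, hs, m, rfl⟩, hss⟩)
            · exact ⟨s, Or.inl hs, m, Or.inl ⟨hs, hm⟩, rfl⟩
            · exact ⟨s, Or.inr hs, m, Or.inr ⟨hs, hss⟩, rfl⟩
        rw [hset]
        exact ih _ _ hφ (fun s' hs' => hs'.2)
  | all v φ ih =>
      have hset : {s' | ∃ s ∈ Y ∪ Z, ∃ m : M, s' = Function.update s v m}
          = {s' | ∃ s ∈ Y, ∃ m : M, s' = Function.update s v m}
            ∪ {s' | ∃ s ∈ Z, ∃ m : M, s' = Function.update s v m} := by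
        ext s'
        constructor
        · rintro ⟨s, (hs | hs), m, rfl⟩
          · exact Or.inl ⟨s, hs, m, rfl⟩
          · exact Or.inr ⟨s, hs, m, rfl⟩
        · rintro (⟨s, hs, m, rfl⟩ | ⟨s, hs, m, rfl⟩)
          · exact ⟨s, Or.inl hs, m, rfl⟩
          · exact ⟨s, Or.inr hs, m, rfl⟩
      show tsat RI DI φ _
      rw [hset]
      exact ih _ _ hY (by rintro s' ⟨s, hs, m, rfl⟩; exact hZ s hs m)

end Aux

/-- **Existential quantifier elimination for upwards closed dependencies.**
`∃v φ ≡ (∃v φᶠ) ∧ ∀v (φ ↾ φᶠ)`. -/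
theorem ex_clean {σ : Type} {ar : σ → ℕ} {δ : Type} {dar : δ → ℕ} {M : Type}
    (RI : ∀ r : σ, Set (Fin (ar r) → M)) (DI : DepFam δ dar) (hup : UpClosed DI)
    (v : ℕ) (φ : TForm σ ar δ dar) (X : Team M) :
    tsat RI DI (.ex v φ) X ↔
      tsat RI DI (.and (.ex v φ.flatten) (.all v (φ.restrict φ.flatten))) X := by
  simp only [tsat, TForm.restrict]
  constructor
  · rintro ⟨H, hne, hφ⟩
    set Y : Team M := {s' | ∃ s ∈ X, ∃ m ∈ H s, s' = Function.update s v m} with hYdef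
    set Z : Team M := {s' | ∃ s ∈ X, ∃ m : M, s' = Function.update s v m} with hZdef
    have hYs : ∀ s ∈ Y, ssat RI φ s := tsat_ssat RI DI φ Y hφ
    have hYZ : Y ⊆ Z := by rintro s' ⟨s, hs, m, _, rfl⟩; exact ⟨s, hs, m, rfl⟩
    refine ⟨⟨H, hne, ?_⟩, ?_⟩
    · exact flat_tsat RI DI _ (flatten_isFO _) _
        (fun s hs => (ssat_flatten RI φ s).2 (hYs s hs))
    · refine ⟨{s ∈ Z | ¬ ssat RI φ s}, {s ∈ Z | ssat RI φ s}, ?_, ?_, ?_, ?_⟩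
      · ext s
        constructor
        · intro hs
          rcases Classical.em (ssat RI φ s) with h' | h'
          · exact Or.inr ⟨hs, h'⟩
          · exact Or.inl ⟨hs, h'⟩
        · rintro (⟨hs, _⟩ | ⟨hs, _⟩) <;> exact hs
      · refine flat_tsat RI DI _ (neg_isFO _ (flatten_isFO _)) _ (fun s hs => ?_)
        exact (ssat_neg RI _ (flatten_isFO _) s).2
          (fun h' => hs.2 ((ssat_flatten RI φ s).1 h'))
      · exact flat_tsat RI DI _ (flatten_isFO _) _
          (fun s hs => (ssat_flatten RI φ s).2 hs.2)
      · have hsub : Y ⊆ {s ∈ Z | ssat RI φ s} := fun s hs => ⟨hYZ hs, hYs s hs⟩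
        have := tsat_union RI DI hup φ Y {s ∈ Z | ssat RI φ s} hφ (fun s hs => hs.2)
        rwa [Set.union_eq_self_of_subset_left hsub] at this
  · rintro ⟨⟨H, hne, hf⟩, N, P, hZ, hN, hPflat, hP⟩
    have hfs : ∀ s' ∈ ({s' | ∃ s ∈ X, ∃ m ∈ H s, s' = Function.update s v m} : Team M),
        ssat RI φ s' := fun s' h => (ssat_flatten RI φ s').1 (tsat_ssat RI DI _ _ hf s' h)
    have hNs : ∀ s ∈ N, ¬ ssat RI φ s := fun s hs h' =>
      (ssat_neg RI _ (flatten_isFO φ) s).1 (tsat_ssat RI DI _ N hN s hs)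
        ((ssat_flatten RI φ s).2 h')
    refine ⟨fun s => {m | Function.update s v m ∈ P}, ?_, ?_⟩
    · intro s hs
      obtain ⟨m, hm⟩ := hne s hs
      have hu : Function.update s v m ∈ N ∪ P := by
        rw [← hZ]; exact ⟨s, hs, m, rfl⟩
      rcases hu with hu | hu
      · exact absurd (hfs _ ⟨s, hs, m, hm, rfl⟩) (hNs _ hu)
      · exact ⟨m, hu⟩
    · have hset : {s' | ∃ s ∈ X, ∃ m ∈ {m | Function.update s v m ∈ P},
          s' = Function.update s v m} = P := by
        ext s'
        constructor
        · rintro ⟨s, _, m, hm, rfl⟩; exact hm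
        · intro hp
          have : s' ∈ N ∪ P := Or.inr hp
          rw [← hZ] at this
          obtain ⟨s, hs, m, rfl⟩ := this
          exact ⟨s, hs, m, hp, rfl⟩
      rw [hset]
      exact hP
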